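/- (Proposition 2, part 2, in contracted form.) Let g be a pointwise-hermitian C¹ metric on ℂⁿ with real and imaginary parts g = g^R + i·g^I. Then at every point, for every index γ and every real vector w ∈ ℝⁿ: Σ_{α,β} (∂_γ̄ g_{αβ̄} − ∂_β̄ g_{αγ̄} + ∂_α g_{βγ̄}) w^α w^β = Σ_{α,β} (½·∂^x_γ g^R_{αβ̄} − Φ^{γ--}_{αβ} + i·Φ^{γ-+}_{αβ}) w^α w^β. -/

import Mathlib

open Complex

noncomputable section

/-- The `α`-th standard basis vector of `ℂⁿ`. -/
def eV (n : ℕ) (α : Fin n) : Fin n → ℂ := fun i => if i = α then 1 else 0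

/-- `∂^x_α`: partial derivative of `f : ℂⁿ → ℂ` at `z` in the real direction `x^α`. -/
def dX {n : ℕ} (α : Fin n) (f : (Fin n → ℂ) → ℂ) (z : Fin n → ℂ) : ℂ :=
  deriv (fun s : ℝ => f (fun i => z i + (s : ℂ) * eV n α i)) 0

/-- `∂^t_α`: partial derivative of `f : ℂⁿ → ℂ` at `z` in the imaginary direction `t^α`. -/
def dT {n : ℕ} (α : Fin n) (f : (Fin n → ℂ) → ℂ) (z : Fin n → ℂ) : ℂ :=
  deriv (fun s : ℝ => f (fun i => z i + (s : ℂ) * Complex.I * eV n α i)) 0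

/-- Wirtinger derivative `∂_α = ½(∂^x_α − i ∂^t_α)`. -/
def dW {n : ℕ} (α : Fin n) (f : (Fin n → ℂ) → ℂ) (z : Fin n → ℂ) : ℂ :=
  (dX α f z - Complex.I * dT α f z) / 2

/-- Conjugate Wirtinger derivative `∂_ᾱ = ½(∂^x_α + i ∂^t_α)`. -/
def dWbar {n : ℕ} (α : Fin n) (f : (Fin n → ℂ) → ℂ) (z : Fin n → ℂ) : ℂ :=
  (dX α f z + Complex.I * dT α f z) / 2

/-- The `(i,j)` entry of the metric, as a `ℂ`-valued function `g_{i j̄}`. -/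
def gF {n : ℕ} (g : (Fin n → ℂ) → Matrix (Fin n) (Fin n) ℂ) (i j : Fin n) :
    (Fin n → ℂ) → ℂ := fun z => g z i j

/-- The real part `g^R_{i j̄}` of the metric entry, coerced into `ℂ`. -/
def gR {n : ℕ} (g : (Fin n → ℂ) → Matrix (Fin n) (Fin n) ℂ) (i j : Fin n) :
    (Fin n → ℂ) → ℂ := fun z => ((g z i j).re : ℂ)

/-- The imaginary part `g^I_{i j̄}` of the metric entry, coerced into `ℂ`. -/
def gI {n : ℕ} (g : (Fin n → ℂ) → Matrix (Fin n) (Fin n) ℂ) (i j : Fin n) :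
    (Fin n → ℂ) → ℂ := fun z => ((g z i j).im : ℂ)

/-- `g` is pointwise hermitian: `g_{αβ̄} = conj (g_{βᾱ})`. -/
def IsHermitianMetric {n : ℕ} (g : (Fin n → ℂ) → Matrix (Fin n) (Fin n) ℂ) : Prop :=
  ∀ z i j, g z i j = (starRingEnd ℂ) (g z j i)

/-- `g` is continuously differentiable (entrywise, as a map over `ℝ`). -/
def MetricC1 {n : ℕ} (g : (Fin n → ℂ) → Matrix (Fin n) (Fin n) ℂ) : Prop :=
  ∀ i j, ContDiff ℝ 1 (gF g i j)

/-- Primary field `Φ^{γ++}_{αβ}`. -/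
def PhiPP {n : ℕ} (g : (Fin n → ℂ) → Matrix (Fin n) (Fin n) ℂ) (γ α β : Fin n)
    (z : Fin n → ℂ) : ℂ :=
  (dX γ (gR g α β) z - dX α (gR g β γ) z - dX β (gR g α γ) z) / 2

/-- Primary field `Φ^{γ+-}_{αβ}`. -/
def PhiPM {n : ℕ} (g : (Fin n → ℂ) → Matrix (Fin n) (Fin n) ℂ) (γ α β : Fin n)
    (z : Fin n → ℂ) : ℂ :=
  (dX γ (gI g α β) z - dX α (gI g β γ) z - dX β (gI g α γ) z) / 2

/-- Primary field `Φ^{γ-+}_{αβ}`. -/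
def PhiMP {n : ℕ} (g : (Fin n → ℂ) → Matrix (Fin n) (Fin n) ℂ) (γ α β : Fin n)
    (z : Fin n → ℂ) : ℂ :=
  (dT γ (gR g α β) z - dT α (gR g β γ) z - dT β (gR g α γ) z) / 2

/-- Primary field `Φ^{γ--}_{αβ}`. -/
def PhiMM {n : ℕ} (g : (Fin n → ℂ) → Matrix (Fin n) (Fin n) ℂ) (γ α β : Fin n)
    (z : Fin n → ℂ) : ℂ :=
  (dT γ (gI g α β) z - dT α (gI g β γ) z - dT β (gI g α γ) z) / 2

/-- Secondary field `F^x_{αγβ}`. -/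
def Fx {n : ℕ} (g : (Fin n → ℂ) → Matrix (Fin n) (Fin n) ℂ) (α γ β : Fin n)
    (z : Fin n → ℂ) : ℂ :=
  dX γ (gI g α β) z - dX β (gI g α γ) z

/-- Secondary field `F^t_{αγβ}`. -/
def Ft {n : ℕ} (g : (Fin n → ℂ) → Matrix (Fin n) (Fin n) ℂ) (α γ β : Fin n)
    (z : Fin n → ℂ) : ℂ :=
  dT γ (gI g α β) z - dT β (gI g α γ) z

/-- The Lagrangian `L(z,v) = sqrt(Re Σ g_{αβ̄}(z) v^α conj(v^β))`. -/
def Lag {n : ℕ} (g : (Fin n → ℂ) → Matrix (Fin n) (Fin n) ℂ) (z v : Fin n → ℂ) : ℝ :=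
  Real.sqrt (∑ α, ∑ β, g z α β * v α * (starRingEnd ℂ) (v β)).re

/-- Wirtinger derivative with respect to `conj(v^γ)` of a real-valued function on `ℂⁿ`:
`½(∂/∂(Re v^γ) + i·∂/∂(Im v^γ))`. -/
def dWbarR {n : ℕ} (γ : Fin n) (f : (Fin n → ℂ) → ℝ) (v : Fin n → ℂ) : ℂ :=
  ((deriv (fun s : ℝ => f (fun i => v i + (s : ℂ) * eV n γ i)) 0 : ℝ) +
    Complex.I *
      (deriv (fun s : ℝ => f (fun i => v i + (s : ℂ) * Complex.I * eV n γ i)) 0 : ℝ)) / 2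

/-- The Lagrangian speed `L(σ)` of a curve `z : ℝ → ℂⁿ`. -/
def curveL {n : ℕ} (g : (Fin n → ℂ) → Matrix (Fin n) (Fin n) ℂ) (z : ℝ → Fin n → ℂ)
    (σ : ℝ) : ℝ :=
  Lag g (z σ) (fun α => deriv (fun τ => z τ α) σ)

/-- `Dz^α = (1/L)·dz^α/dσ`. -/
def Dz {n : ℕ} (g : (Fin n → ℂ) → Matrix (Fin n) (Fin n) ℂ) (z : ℝ → Fin n → ℂ)
    (α : Fin n) (σ : ℝ) : ℂ :=
  (curveL g z σ : ℂ)⁻¹ * deriv (fun τ => z τ α) σ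

/-- `D²z^α = (1/L)·d/dσ((1/L)·dz^α/dσ)`. -/
def D2z {n : ℕ} (g : (Fin n → ℂ) → Matrix (Fin n) (Fin n) ℂ) (z : ℝ → Fin n → ℂ)
    (α : Fin n) (σ : ℝ) : ℂ :=
  (curveL g z σ : ℂ)⁻¹ *
    deriv (fun τ => (curveL g z τ : ℂ)⁻¹ * deriv (fun s => z s α) τ) σ

/-- `Dx^α = (1/L)·dx^α/dσ`. -/
def Dx {n : ℕ} (g : (Fin n → ℂ) → Matrix (Fin n) (Fin n) ℂ) (z : ℝ → Fin n → ℂ)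
    (α : Fin n) (σ : ℝ) : ℝ :=
  (curveL g z σ)⁻¹ * deriv (fun τ => (z τ α).re) σ

/-- `Dt^α = (1/L)·dt^α/dσ`. -/
def Dt {n : ℕ} (g : (Fin n → ℂ) → Matrix (Fin n) (Fin n) ℂ) (z : ℝ → Fin n → ℂ)
    (α : Fin n) (σ : ℝ) : ℝ :=
  (curveL g z σ)⁻¹ * deriv (fun τ => (z τ α).im) σ

/-- `D²x^α = (1/L)·d/dσ((1/L)·dx^α/dσ)`. -/
def D2x {n : ℕ} (g : (Fin n → ℂ) → Matrix (Fin n) (Fin n) ℂ) (z : ℝ → Fin n → ℂ)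
    (α : Fin n) (σ : ℝ) : ℝ :=
  (curveL g z σ)⁻¹ *
    deriv (fun τ => (curveL g z τ)⁻¹ * deriv (fun s => (z s α).re) τ) σ

/-- `D²t^α = (1/L)·d/dσ((1/L)·dt^α/dσ)`. -/
def D2t {n : ℕ} (g : (Fin n → ℂ) → Matrix (Fin n) (Fin n) ℂ) (z : ℝ → Fin n → ℂ)
    (α : Fin n) (σ : ℝ) : ℝ :=
  (curveL g z σ)⁻¹ *
    deriv (fun τ => (curveL g z τ)⁻¹ * deriv (fun s => (z s α).im) τ) σ

/-- The complex geodesic equation (Theorem 1's equation) for the curve `z`. -/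
def GeodesicEq {n : ℕ} (g : (Fin n → ℂ) → Matrix (Fin n) (Fin n) ℂ)
    (z : ℝ → Fin n → ℂ) : Prop :=
  ∀ (γ : Fin n) (σ : ℝ),
    ∑ μ, g (z σ) μ γ * D2z g z μ σ =
      (∑ α, ∑ β, (dWbar γ (gF g α β) (z σ) - dWbar β (gF g α γ) (z σ)) *
          Dz g z α σ * (starRingEnd ℂ) (Dz g z β σ)) -
        ∑ α, ∑ β, dW α (gF g β γ) (z σ) * Dz g z α σ * Dz g z β σ

/-- The real part of the metric as a real matrix. -/
def gRmat {n : ℕ} (g : (Fin n → ℂ) → Matrix (Fin n) (Fin n) ℂ) (z : Fin n → ℂ) :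
    Matrix (Fin n) (Fin n) ℝ :=
  Matrix.of fun i j => (g z i j).re

/-- The link tensor `ε^η_γ = Σ_ν g^I_{νγ̄} ((g^R)⁻¹)_{νη}`. -/
def eps {n : ℕ} (g : (Fin n → ℂ) → Matrix (Fin n) (Fin n) ℂ) (z : Fin n → ℂ)
    (η γ : Fin n) : ℝ :=
  ∑ ν, (g z ν γ).im * (gRmat g z)⁻¹ ν η

private lemma deriv_split_aux {n : ℕ} (f : (Fin n → ℂ) → ℂ) (hf : ContDiff ℝ 1 f)
    (ℓ : ℝ → Fin n → ℂ) (hℓ : Differentiable ℝ ℓ) :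
    deriv (fun s => f (ℓ s)) 0 =
      deriv (fun s => (((f (ℓ s)).re : ℝ) : ℂ)) 0 +
        Complex.I * deriv (fun s => (((f (ℓ s)).im : ℝ) : ℂ)) 0 := by
  have hh : DifferentiableAt ℝ (fun s => f (ℓ s)) 0 :=
    ((hf.differentiable one_ne_zero).comp hℓ).differentiableAt
  have hre : DifferentiableAt ℝ (fun s => (((f (ℓ s)).re : ℝ) : ℂ)) 0 :=
    Complex.ofRealCLM.differentiable.differentiableAt.comp 0
      ((Complex.reCLM.differentiable.differentiableAt).comp 0 hh)
  have him : DifferentiableAt ℝ (fun s => (((f (ℓ s)).im : ℝ) : ℂ)) 0 :=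
    Complex.ofRealCLM.differentiable.differentiableAt.comp 0
      ((Complex.imCLM.differentiable.differentiableAt).comp 0 hh)
  have hfun : (fun s => f (ℓ s)) = fun s =>
      (((f (ℓ s)).re : ℝ) : ℂ) + (((f (ℓ s)).im : ℝ) : ℂ) * Complex.I := by
    funext s; rw [Complex.re_add_im]
  rw [hfun, deriv_fun_add hre (him.mul_const _), deriv_mul_const him]
  ring

private lemma lineX_diff {n : ℕ} (z : Fin n → ℂ) (k : Fin n) :
    Differentiable ℝ (fun s : ℝ => (fun i => z i + (s : ℂ) * eV n k i)) := by
  rw [differentiable_pi]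
  intro i
  exact (differentiable_const _).add (Complex.ofRealCLM.differentiable.mul_const _)

private lemma lineT_diff {n : ℕ} (z : Fin n → ℂ) (k : Fin n) :
    Differentiable ℝ (fun s : ℝ => (fun i => z i + (s : ℂ) * Complex.I * eV n k i)) := by
  rw [differentiable_pi]
  intro i
  exact (differentiable_const _).add
    ((Complex.ofRealCLM.differentiable.mul_const _).mul_const _)

private lemma dX_split {n : ℕ} (g : (Fin n → ℂ) → Matrix (Fin n) (Fin n) ℂ)
    (hg : MetricC1 g) (z : Fin n → ℂ) (k i j : Fin n) :
    dX k (gF g i j) z = dX k (gR g i j) z + Complex.I * dX k (gI g i j) z := by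
  simp only [dX, gF, gR, gI]
  exact deriv_split_aux (gF g i j) (hg i j) _ (lineX_diff z k)

private lemma dT_split {n : ℕ} (g : (Fin n → ℂ) → Matrix (Fin n) (Fin n) ℂ)
    (hg : MetricC1 g) (z : Fin n → ℂ) (k i j : Fin n) :
    dT k (gF g i j) z = dT k (gR g i j) z + Complex.I * dT k (gI g i j) z := by
  simp only [dT, gF, gR, gI]
  exact deriv_split_aux (gF g i j) (hg i j) _ (lineT_diff z k)

private lemma gR_symm {n : ℕ} (g : (Fin n → ℂ) → Matrix (Fin n) (Fin n) ℂ)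
    (hherm : IsHermitianMetric g) (i j : Fin n) : gR g i j = gR g j i := by
  funext v; simp only [gR]; rw [hherm v i j]; simp

private lemma gI_eq_neg {n : ℕ} (g : (Fin n → ℂ) → Matrix (Fin n) (Fin n) ℂ)
    (hherm : IsHermitianMetric g) (i j : Fin n) :
    gI g i j = fun v => -(gI g j i v) := by
  funext v; simp only [gI]; rw [hherm v i j]; simp

private lemma dX_neg {n : ℕ} (k : Fin n) (f : (Fin n → ℂ) → ℂ) (z : Fin n → ℂ) :
    dX k (fun v => -(f v)) z = -dX k f z := by
  simp only [dX]; exact deriv.neg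

private lemma dT_neg {n : ℕ} (k : Fin n) (f : (Fin n → ℂ) → ℂ) (z : Fin n → ℂ) :
    dT k (fun v => -(f v)) z = -dT k f z := by
  simp only [dT]; exact deriv.neg

private lemma dX_gR_swap {n : ℕ} (g : (Fin n → ℂ) → Matrix (Fin n) (Fin n) ℂ)
    (hherm : IsHermitianMetric g) (z : Fin n → ℂ) (k i j : Fin n) :
    dX k (gR g i j) z = dX k (gR g j i) z := by rw [gR_symm g hherm i j]

private lemma dT_gR_swap {n : ℕ} (g : (Fin n → ℂ) → Matrix (Fin n) (Fin n) ℂ)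
    (hherm : IsHermitianMetric g) (z : Fin n → ℂ) (k i j : Fin n) :
    dT k (gR g i j) z = dT k (gR g j i) z := by rw [gR_symm g hherm i j]

private lemma dX_gI_swap {n : ℕ} (g : (Fin n → ℂ) → Matrix (Fin n) (Fin n) ℂ)
    (hherm : IsHermitianMetric g) (z : Fin n → ℂ) (k i j : Fin n) :
    dX k (gI g i j) z = -dX k (gI g j i) z := by
  rw [gI_eq_neg g hherm i j, dX_neg]

private lemma dT_gI_swap {n : ℕ} (g : (Fin n → ℂ) → Matrix (Fin n) (Fin n) ℂ)
    (hherm : IsHermitianMetric g) (z : Fin n → ℂ) (k i j : Fin n) :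
    dT k (gI g i j) z = -dT k (gI g j i) z := by
  rw [gI_eq_neg g hherm i j, dT_neg]

private lemma symmetrize {n : ℕ} (A B : Fin n → Fin n → ℂ) (w : Fin n → ℝ)
    (h : ∀ α β, A α β + A β α = B α β + B β α) :
    ∑ α, ∑ β, A α β * (w α : ℂ) * (w β : ℂ) =
      ∑ α, ∑ β, B α β * (w α : ℂ) * (w β : ℂ) := by
  have half : ∀ C : Fin n → Fin n → ℂ,
      ∑ α, ∑ β, C α β * (w α : ℂ) * (w β : ℂ) =
        (∑ α, ∑ β, (C α β + C β α) * (w α : ℂ) * (w β : ℂ)) / 2 := by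
    intro C
    have hswap : ∑ α, ∑ β, C α β * (w α : ℂ) * (w β : ℂ) =
        ∑ α, ∑ β, C β α * (w α : ℂ) * (w β : ℂ) := by
      rw [Finset.sum_comm]
      exact Finset.sum_congr rfl fun α _ => Finset.sum_congr rfl fun β _ => by ring
    have expand : ∑ α, ∑ β, (C α β + C β α) * (w α : ℂ) * (w β : ℂ) =
        (∑ α, ∑ β, C α β * (w α : ℂ) * (w β : ℂ)) +
          ∑ α, ∑ β, C β α * (w α : ℂ) * (w β : ℂ) := by
      simp [add_mul, Finset.sum_add_distrib]
    rw [expand, ← hswap]; ring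
  rw [half A, half B]
  congr 1
  exact Finset.sum_congr rfl fun α _ => Finset.sum_congr rfl fun β _ => by rw [h]

/-- Proposition 2, part 2 (contracted with a real vector `w`):
`Σ (∂_γ̄ g_{αβ̄} − ∂_β̄ g_{αγ̄} + ∂_α g_{βγ̄}) w^α w^β
  = Σ (½ ∂^x_γ g^R − Φ^{γ--} + i Φ^{γ-+}) w^α w^β`. -/
theorem prop2_part2 {n : ℕ} (g : (Fin n → ℂ) → Matrix (Fin n) (Fin n) ℂ)
    (hg : MetricC1 g) (hherm : IsHermitianMetric g)
    (z : Fin n → ℂ) (γ : Fin n) (w : Fin n → ℝ) :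
    ∑ α, ∑ β,
        (dWbar γ (gF g α β) z - dWbar β (gF g α γ) z + dW α (gF g β γ) z) *
          (w α : ℂ) * (w β : ℂ) =
      ∑ α, ∑ β,
        (dX γ (gR g α β) z / 2 - PhiMM g γ α β z + Complex.I * PhiMP g γ α β z) *
          (w α : ℂ) * (w β : ℂ) := by
  apply symmetrize
  intro α β
  simp only [dWbar, dW, PhiMM, PhiMP,
    dX_split g hg z γ α β, dX_split g hg z γ β α, dX_split g hg z β α γ,
    dX_split g hg z α β γ,
    dT_split g hg z γ α β, dT_split g hg z γ β α, dT_split g hg z β α γ,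
    dT_split g hg z α β γ]
  rw [dX_gR_swap g hherm z γ β α, dT_gR_swap g hherm z γ β α,
    dX_gI_swap g hherm z γ β α, dT_gI_swap g hherm z γ β α]
  ring_nf
  simp only [Complex.I_sq]
  ring
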